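/- arXiv:2509.08460 — 2 statements merged into one kernel-verified Lean document; each statement's English description precedes it below -/
import Mathlib

section
/- If the defender satisfies J(l_a, l_d, φ) > 0 (i.e., lies strictly in the defender-win region), then the attacker's Apollonius disk does not intersect the defense line: l_p − R_AC > 0 where l_p is the distance of the Apollonius center to the line and R_AC its radius. -/
/-- If the defender lies strictly in the defender-win region (`J > 0`), the
attacker's Apollonius disk does not intersect the defense line: `l_p - R_AC > 0`. -/
theorem defender_win_disk_disjoint (α l_a l_d φ : ℝ)
    (hα : 0 < α) (hα1 : α < 1) (hla : 0 < l_a) (hld : 0 < l_d)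
    (hφ : φ ∈ Set.Ioo (0 : ℝ) Real.pi)
    (l_p R_AC : ℝ)
    (hlp : l_p = (α ^ 2 * l_d + l_a) / (1 - α ^ 2))
    (hR : R_AC = α / (1 - α ^ 2) * ((l_a + l_d) / Real.sin φ))
    (hJ : l_a * (1 - α / Real.sin φ) - l_d * (α / Real.sin φ - α ^ 2) > 0) :
    l_p - R_AC > 0 := by
  have hs : 0 < Real.sin φ := Real.sin_pos_of_pos_of_lt_pi hφ.1 hφ.2
  have h1 : 0 < 1 - α ^ 2 := by nlinarith
  have key : l_p - R_AC =
      (l_a * (1 - α / Real.sin φ) - l_d * (α / Real.sin φ - α ^ 2)) / (1 - α ^ 2) := by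
    subst hlp hR
    field_simp
    ring
  rw [key]
  exact div_pos hJ h1
end

section
/- Define l_Ξ(η) = (1/(1−α²))·(ε_D − ε_P cos η − α·√(ε_P² + ε_D² − 2 ε_P ε_D cos η)) for η ∈ [0, λ/2] with 0 < λ/2 < π/2. Then the derivative dl_Ξ/dη vanishes only when sin η = 0 or cos η = (ε_P² + (1−α²)ε_D²)/(2 ε_P ε_D); consequently the minimum of l_Ξ over [0, λ/2] is attained at η = 0, η = λ/2, or at η* = arccos((ε_P² + (1−α²)ε_D²)/(2 ε_P ε_D)) if this value lies in [0, λ/2]. -/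
/-- Appendix B, eqs. (37)–(41): the stationary points of the critical barrier
distance `l_Ξ(η)` on `[0, λ/2]`, and the location of its minimum. -/
theorem lXi_min_characterization (α εP εD lam : ℝ)
    (hα : 0 < α) (hα1 : α < 1) (hεP : 0 < εP) (hεD : εP < εD)
    (hlam : 0 < lam / 2) (hlam2 : lam / 2 < Real.pi / 2)
    (lXi : ℝ → ℝ)
    (hlXi : ∀ η, lXi η = 1 / (1 - α ^ 2) *
      (εD - εP * Real.cos η -
        α * Real.sqrt (εP ^ 2 + εD ^ 2 - 2 * εP * εD * Real.cos η))) :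
    (∀ η ∈ Set.Icc (0 : ℝ) (lam / 2), deriv lXi η = 0 →
        Real.sin η = 0 ∨
          Real.cos η = (εP ^ 2 + (1 - α ^ 2) * εD ^ 2) / (2 * εP * εD)) ∧
    (∃ η₀ ∈ Set.Icc (0 : ℝ) (lam / 2),
        (η₀ = 0 ∨ η₀ = lam / 2 ∨
          η₀ = Real.arccos ((εP ^ 2 + (1 - α ^ 2) * εD ^ 2) / (2 * εP * εD))) ∧
        ∀ η ∈ Set.Icc (0 : ℝ) (lam / 2), lXi η₀ ≤ lXi η) := by
  have hεD0 : 0 < εD := hεP.trans hεD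
  have hα2 : (0:ℝ) < 1 - α ^ 2 := by nlinarith
  set Q : ℝ → ℝ := fun η => εP ^ 2 + εD ^ 2 - 2 * εP * εD * Real.cos η with hQ
  have hQpos : ∀ η, 0 < Q η := by
    intro η
    have h1 := Real.cos_le_one η
    have h2 : 0 < εP * εD := mul_pos hεP hεD0
    simp only [hQ]
    nlinarith [sq_nonneg (εD - εP)]
  have hfun : lXi = fun η => 1 / (1 - α ^ 2) *
      (εD - εP * Real.cos η - α * Real.sqrt (Q η)) := funext hlXi
  have hf : ∀ η, HasDerivAt lXi
      (1 / (1 - α ^ 2) * (εP * Real.sin η -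
        α * (2 * εP * εD * Real.sin η / (2 * Real.sqrt (Q η))))) η := by
    intro η
    rw [hfun]
    have h1 : HasDerivAt Q (2 * εP * εD * Real.sin η) η := by
      have := ((Real.hasDerivAt_cos η).const_mul (2 * εP * εD)).const_sub
        (εP ^ 2 + εD ^ 2)
      exact this.congr_deriv (by ring)
    have hs : HasDerivAt (fun η => Real.sqrt (Q η))
        (1 / (2 * Real.sqrt (Q η)) * (2 * εP * εD * Real.sin η)) η :=
      (Real.hasDerivAt_sqrt (ne_of_gt (hQpos η))).comp η h1
    have hc : HasDerivAt (fun η => εD - εP * Real.cos η - α * Real.sqrt (Q η))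
        (εP * Real.sin η -
          α * (2 * εP * εD * Real.sin η / (2 * Real.sqrt (Q η)))) η := by
      have := (((Real.hasDerivAt_cos η).const_mul εP).const_sub εD).sub
        (hs.const_mul α)
      exact this.congr_deriv (by ring)
    exact hc.const_mul _
  have part1 : ∀ η ∈ Set.Icc (0 : ℝ) (lam / 2), deriv lXi η = 0 →
      Real.sin η = 0 ∨
        Real.cos η = (εP ^ 2 + (1 - α ^ 2) * εD ^ 2) / (2 * εP * εD) := by
    intro η _ hd
    rw [(hf η).deriv] at hd
    by_cases hsin : Real.sin η = 0
    · exact Or.inl hsin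
    · right
      have hsq : 0 < Real.sqrt (Q η) := Real.sqrt_pos.mpr (hQpos η)
      have h1 : εP * Real.sin η -
          α * (2 * εP * εD * Real.sin η / (2 * Real.sqrt (Q η))) = 0 := by
        rcases mul_eq_zero.mp hd with h | h
        · exfalso
          have : (1 : ℝ) / (1 - α ^ 2) ≠ 0 := by positivity
          exact this h
        · exact h
      have h2 : Real.sqrt (Q η) = α * εD := by
        have h3 : εP * Real.sin η * Real.sqrt (Q η)
            = α * εP * εD * Real.sin η := by
          field_simp at h1
          linarith
        have h4 : Real.sin η * (εP * Real.sqrt (Q η) - α * εP * εD) = 0 := by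
          ring_nf
          ring_nf at h3
          linarith
        rcases mul_eq_zero.mp h4 with h | h
        · exact absurd h hsin
        · have : εP * Real.sqrt (Q η) = εP * (α * εD) := by linarith
          exact mul_left_cancel₀ (ne_of_gt hεP) this
      have h5 : Q η = α ^ 2 * εD ^ 2 := by
        have := Real.sq_sqrt (le_of_lt (hQpos η))
        rw [h2] at this
        nlinarith
      simp only [hQ] at h5
      have h2εPεD : (2 : ℝ) * εP * εD ≠ 0 := by positivity
      field_simp
      linarith
  refine ⟨part1, ?_⟩
  · have hcont : Continuous lXi :=
      continuous_iff_continuousAt.mpr fun η => (hf η).continuousAt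
    obtain ⟨η₀, hη₀, hmin⟩ := isCompact_Icc.exists_isMinOn
      (Set.nonempty_Icc.mpr (le_of_lt hlam)) hcont.continuousOn
    refine ⟨η₀, hη₀, ?_, fun η hη => hmin hη⟩
    obtain ⟨h0, h2⟩ := hη₀
    rcases eq_or_lt_of_le h0 with h | h
    · exact Or.inl h.symm
    rcases eq_or_lt_of_le h2 with h' | h'
    · exact Or.inr (Or.inl h')
    right; right
    have hloc : IsLocalMin lXi η₀ := hmin.isLocalMin (Icc_mem_nhds h h')
    have hd : deriv lXi η₀ = 0 := hloc.deriv_eq_zero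
    have hsin : Real.sin η₀ ≠ 0 := by
      have hπ : η₀ < Real.pi := by
        have := Real.pi_pos
        linarith [hlam2, h']
      exact ne_of_gt (Real.sin_pos_of_pos_of_lt_pi h hπ)
    rcases part1 η₀ ⟨h0, h2⟩ hd with hs | hc
    · exact absurd hs hsin
    · rw [← hc, Real.arccos_cos (le_of_lt h)
        (by linarith [Real.pi_pos, hlam2, h'])]
end
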